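/- Let u and t be positive integers with u − 1 ≥ ⌈(t−1)/2⌉. Then sba(u,t), the maximum size of an antichain in DBV(u,t), equals the binomial coefficient C(t−1, ⌈(t−1)/2⌉). -/

import Mathlib

/-- The *airiness* of a bit vector `x : Fin t → Bool`: the largest number `u` such that
`x` has `u` consecutive `false` (i.e. zero) entries. -/
noncomputable def air {t : ℕ} (x : Fin t → Bool) : ℕ :=
  sSup {u : ℕ | ∃ j : ℕ, j + u ≤ t ∧ ∀ i : Fin t, j ≤ i.val → i.val < j + u → x i = false}

/-- `DBV u t`: the set of bit vectors of dimension `t` whose first coordinate is `1`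
(`true`) and whose airiness is strictly less than `u`, ordered componentwise. -/
def DBV (u t : ℕ) : Set (Fin t → Bool) :=
  {x | (∀ i : Fin t, i.val = 0 → x i = true) ∧ air x < u}

/-- `sba u t`: the maximum size of an antichain in `DBV u t`. -/
noncomputable def sba (u t : ℕ) : ℕ :=
  sSup {n : ℕ | ∃ X : Finset (Fin t → Bool),
    ↑X ⊆ DBV u t ∧ IsAntichain (· ≤ ·) (X : Set (Fin t → Bool)) ∧ X.card = n}

open Finset

section Aux

variable {t : ℕ}

/-- Positive indices of `Fin t`. -/
abbrev PosIdx (t : ℕ) := {i : Fin t // i.val ≠ 0}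

/-- The support of a bit vector among positive indices. -/
def supp (x : Fin t → Bool) : Finset (PosIdx t) :=
  univ.filter (fun i => x i.val = true)

lemma mem_supp {x : Fin t → Bool} {i : PosIdx t} : i ∈ supp x ↔ x i.val = true := by
  simp [supp]

lemma supp_mono {x y : Fin t → Bool} (hxy : x ≤ y) : supp x ⊆ supp y := by
  intro i hi
  rw [mem_supp] at hi ⊢
  have := hxy i.val
  rw [hi] at this
  cases hyi : y i.val with
  | true => rfl
  | false => rw [hyi] at this; exact absurd this (by simp)

lemma le_of_supp_subset {x y : Fin t → Bool}
    (hx : ∀ i : Fin t, i.val = 0 → x i = true) (hy : ∀ i : Fin t, i.val = 0 → y i = true)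
    (hss : supp x ⊆ supp y) : x ≤ y := by
  intro i
  by_cases h0 : i.val = 0
  · rw [hx i h0, hy i h0]
  · cases hxi : x i with
    | false => exact Bool.false_le _
    | true =>
      have : (⟨i, h0⟩ : PosIdx t) ∈ supp x := mem_supp.2 hxi
      have h2 : y i = true := mem_supp.1 (hss this)
      rw [h2]

/-- Bit vector corresponding to a set of positive indices (with leading one). -/
def fvec (s : Finset (PosIdx t)) : Fin t → Bool :=
  fun i => if h : i.val = 0 then true else decide ((⟨i, h⟩ : PosIdx t) ∈ s)

lemma fvec_first (s : Finset (PosIdx t)) : ∀ i : Fin t, i.val = 0 → fvec s i = true := by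
  intro i hi; simp [fvec, hi]

lemma supp_fvec (s : Finset (PosIdx t)) : supp (fvec s) = s := by
  ext i
  simp [mem_supp, fvec, i.2]

lemma fvec_injective : Function.Injective (fvec (t := t)) := by
  intro s s' hss
  rw [← supp_fvec s, ← supp_fvec s', hss]

lemma fvec_le_iff {s s' : Finset (PosIdx t)} : fvec s ≤ fvec s' ↔ s ⊆ s' := by
  constructor
  · intro hle
    rw [← supp_fvec s, ← supp_fvec s']
    exact supp_mono hle
  · intro hss
    refine le_of_supp_subset (fvec_first s) (fvec_first s') ?_
    rw [supp_fvec, supp_fvec]; exact hss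

lemma window_le_false_card {x : Fin t → Bool} {u' j : ℕ} (hj : j + u' ≤ t)
    (hw : ∀ i : Fin t, j ≤ i.val → i.val < j + u' → x i = false) :
    u' ≤ (univ.filter (fun i => x i = false)).card := by
  classical
  have := Finset.card_le_card_of_injOn
    (f := fun k : Fin u' => (⟨j + k.val, by omega⟩ : Fin t))
    (s := (univ : Finset (Fin u')))
    (t := univ.filter (fun i => x i = false))
    (by
      intro k _
      simp only [mem_coe, mem_filter, mem_univ, true_and]
      exact hw ⟨j + k.val, by omega⟩ (by simp) (by simp only [Fin.val_mk]; omega))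
    (by
      intro a _ b _ hab
      have h2 : (⟨j + a.val, by omega⟩ : Fin t).val = (⟨j + b.val, by omega⟩ : Fin t).val :=
        congrArg Fin.val hab
      simp only [Fin.val_mk] at h2
      exact Fin.ext (by omega))
  simpa using this

lemma air_le {x : Fin t → Bool} {B : ℕ}
    (hB : ∀ u' ∈ {u : ℕ | ∃ j : ℕ, j + u ≤ t ∧
        ∀ i : Fin t, j ≤ i.val → i.val < j + u → x i = false}, u' ≤ B) :
    air x ≤ B := by
  refine csSup_le ⟨0, ?_⟩ hB
  exact ⟨0, by omega, fun i h1 h2 => by omega⟩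

lemma true_card_fvec (ht : 0 < t) (s : Finset (PosIdx t)) :
    s.card + 1 ≤ (univ.filter (fun i => fvec s i = true)).card := by
  classical
  have hsub : insert (⟨0, ht⟩ : Fin t) (s.image Subtype.val) ⊆
      univ.filter (fun i => fvec s i = true) := by
    intro i hi
    simp only [mem_insert, mem_image] at hi
    simp only [mem_filter, mem_univ, true_and]
    rcases hi with rfl | ⟨a, ha, rfl⟩
    · exact fvec_first s _ rfl
    · simp [fvec, a.2, ha]
  have hcard : (insert (⟨0, ht⟩ : Fin t) (s.image Subtype.val)).card = s.card + 1 := by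
    rw [Finset.card_insert_of_notMem, Finset.card_image_of_injective _ Subtype.val_injective]
    simp only [mem_image]
    rintro ⟨a, _, ha⟩
    exact a.2 (congrArg Fin.val ha)
  rw [← hcard]
  exact Finset.card_le_card hsub

lemma air_fvec_lt (ht : 0 < t) {u : ℕ} (s : Finset (PosIdx t)) (hcard : t ≤ s.card + u) :
    air (fvec s) < u := by
  have hle : air (fvec s) ≤ t - (s.card + 1) := by
    refine air_le ?_
    rintro u' ⟨j, hj, hw⟩
    have h1 := window_le_false_card hj hw
    have h2 := true_card_fvec ht s
    have h3 := Finset.card_filter_add_card_filter_not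
      (s := (univ : Finset (Fin t))) (p := fun i => fvec s i = true)
    simp only [Finset.card_univ, Fintype.card_fin, Bool.not_eq_true] at h3
    omega
  have : s.card + 1 ≤ t := by
    have := true_card_fvec ht s
    have h5 : (univ.filter (fun i => fvec s i = true)).card ≤ t := by
      simpa using Finset.card_le_card (Finset.filter_subset _ (univ : Finset (Fin t)))
    omega
  omega

lemma card_posIdx (ht : 0 < t) : Fintype.card (PosIdx t) = t - 1 := by
  classical
  have h1 : Fintype.card {i : Fin t // i.val = 0} = 1 := by
    rw [Fintype.card_subtype]
    have : (univ.filter (fun i : Fin t => i.val = 0)) = {⟨0, ht⟩} := by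
      ext i
      simp [Fin.ext_iff]
    rw [this, Finset.card_singleton]
  have := Fintype.card_subtype_compl (fun i : Fin t => i.val = 0)
  simp only [Fintype.card_fin, h1] at this
  exact this

lemma antichain_card_le {u : ℕ} (ht : 0 < t) (X : Finset (Fin t → Bool))
    (hX : ↑X ⊆ DBV u t) (hanti : IsAntichain (· ≤ ·) (X : Set (Fin t → Bool))) :
    X.card ≤ (t - 1).choose ((t - 1) / 2) := by
  classical
  have hinj : Set.InjOn supp (X : Set (Fin t → Bool)) := by
    intro x hx y hy hxy
    funext i
    by_cases h0 : i.val = 0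
    · rw [(hX hx).1 i h0, (hX hy).1 i h0]
    · have h1 : x i = true ↔ y i = true := by
        rw [← mem_supp (i := ⟨i, h0⟩), ← mem_supp (i := ⟨i, h0⟩), hxy]
      cases hxi : x i with
      | true => exact (h1.1 hxi).symm
      | false =>
        cases hyi : y i with
        | true => rw [hxi] at h1; simp at h1; rw [hyi] at h1; simp at h1
        | false => rfl
  have hanti' : IsAntichain (· ⊆ ·) ((X.image supp : Finset (Finset (PosIdx t))) :
      Set (Finset (PosIdx t))) := by
    intro a ha b hb hab hsub
    simp only [coe_image, Set.mem_image, mem_coe] at ha hb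
    obtain ⟨x, hx, rfl⟩ := ha
    obtain ⟨y, hy, rfl⟩ := hb
    have hxy : x ≠ y := fun hxyeq => hab (by rw [hxyeq])
    exact hanti hx hy hxy (le_of_supp_subset (hX hx).1 (hX hy).1 hsub)
  have := IsAntichain.sperner hanti'
  rw [card_posIdx ht] at this
  rwa [Finset.card_image_of_injOn hinj] at this

end Aux

/-- For positive integers `u` and `t` with `u - 1 ≥ ⌈(t-1)/2⌉` (the ceiling
`⌈(t-1)/2⌉` is `(t - 1 + 1) / 2` in natural-number arithmetic), the maximum size
`sba u t` of an antichain in `DBV u t` equals the binomial coefficient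
`C(t - 1, ⌈(t-1)/2⌉)`. -/
theorem sba_eq_of_large_u (u t : ℕ) (hu : 0 < u) (ht : 0 < t)
    (h : (t - 1 + 1) / 2 ≤ u - 1) :
    sba u t = Nat.choose (t - 1) ((t - 1 + 1) / 2) := by
  classical
  have ht1 : t - 1 + 1 = t := by omega
  rw [ht1] at h ⊢
  set m := t / 2 with hm
  set C := (t - 1).choose m with hC
  have hsymm : (t - 1).choose ((t - 1) / 2) = C := by
    rw [hC, hm]
    have h1 : t / 2 = (t - 1) - (t - 1) / 2 := by omega
    rw [h1, Nat.choose_symm (Nat.div_le_self _ _)]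
  -- the set whose sSup is sba
  set S := {n : ℕ | ∃ X : Finset (Fin t → Bool),
    ↑X ⊆ DBV u t ∧ IsAntichain (· ≤ ·) (X : Set (Fin t → Bool)) ∧ X.card = n} with hS
  have hub : ∀ n ∈ S, n ≤ C := by
    rintro n ⟨X, hX, hanti, rfl⟩
    rw [← hsymm]
    exact antichain_card_le ht X hX hanti
  have hmem : C ∈ S := by
    refine ⟨(Finset.univ.powersetCard m).image fvec, ?_, ?_, ?_⟩
    · intro x hx
      simp only [coe_image, Set.mem_image, mem_coe, Finset.mem_powersetCard] at hx
      obtain ⟨s, ⟨_, hscard⟩, rfl⟩ := hx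
      refine ⟨fvec_first s, air_fvec_lt ht s (by omega)⟩
    · intro a ha b hb hab hle
      simp only [coe_image, Set.mem_image, mem_coe, Finset.mem_powersetCard] at ha hb
      obtain ⟨s, ⟨_, hscard⟩, rfl⟩ := ha
      obtain ⟨s', ⟨_, hscard'⟩, rfl⟩ := hb
      have hss : s ⊆ s' := fvec_le_iff.1 hle
      have : s = s' := Finset.eq_of_subset_of_card_le hss (by omega)
      exact hab (by rw [this])
    · rw [Finset.card_image_of_injective _ fvec_injective,
        Finset.card_powersetCard, Finset.card_univ, card_posIdx ht]
  exact le_antisymm (csSup_le ⟨C, hmem⟩ hub) (le_csSup ⟨C, hub⟩ hmem)
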